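/- Let X be a polynomial vector field on ℝ^n and let J ⊆ ℝ[x_1,…,x_n] be an ideal invariant under L_X. If x : [0,T] → ℝ^n is continuous, differentiable on [0,T] with x'(t) = X(x(t)) for all t ∈ [0,T], and x(0) ∈ 𝕍(J), then x(t) ∈ 𝕍(J) for all t ∈ [0,T]. -/

import Mathlib

open MvPolynomial

/-- Evaluation of a polynomial vector field at a point of `ℝ^n`. -/
noncomputable def pvfEval {n : ℕ} (X : Fin n → MvPolynomial (Fin n) ℝ) (a : Fin n → ℝ) :
    Fin n → ℝ := fun i => eval a (X i)

/-- Lie bracket of polynomial vector fields: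
`[X,Y]_j = ∑ i, (X i * ∂Y_j/∂x_i − Y i * ∂X_j/∂x_i)`. -/
noncomputable def pBracket {n : ℕ} (X Y : Fin n → MvPolynomial (Fin n) ℝ) :
    Fin n → MvPolynomial (Fin n) ℝ :=
  fun j => ∑ i, (X i * pderiv i (Y j) - Y i * pderiv i (X j))

/-- Lie derivative of a polynomial along a polynomial vector field:
`L_X p = ∑ i, X i * ∂p/∂x_i`. -/
noncomputable def pLieDeriv {n : ℕ} (X : Fin n → MvPolynomial (Fin n) ℝ)
    (p : MvPolynomial (Fin n) ℝ) : MvPolynomial (Fin n) ℝ :=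
  ∑ i, X i * pderiv i p

/-- An ideal `I` is invariant under `L_X` if `L_X p ∈ I` for every `p ∈ I`. -/
def IdealInvariant {n : ℕ} (X : Fin n → MvPolynomial (Fin n) ℝ)
    (I : Ideal (MvPolynomial (Fin n) ℝ)) : Prop :=
  ∀ p ∈ I, pLieDeriv X p ∈ I

/-- The algebraic set `𝕍(J)` of an ideal `J`. -/
def zeroSet {n : ℕ} (J : Ideal (MvPolynomial (Fin n) ℝ)) : Set (Fin n → ℝ) :=
  {a | ∀ p ∈ J, eval a p = 0}

/-- The vanishing ideal `𝕀(A)` of a set `A ⊆ ℝ^n`. -/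
noncomputable def zeroIdeal {n : ℕ} (A : Set (Fin n → ℝ)) :
    Ideal (MvPolynomial (Fin n) ℝ) where
  carrier := {p | ∀ a ∈ A, eval a p = 0}
  add_mem' := fun hp hq a ha => by simp [hp a ha, hq a ha]
  zero_mem' := fun a ha => by simp
  smul_mem' := fun c p hp a ha => by simp [smul_eq_mul, hp a ha]

/-- The family `𝒞^k` of Lie brackets of depth at most `k` of the system vector fields
`f, g_1, …, g_m`: `𝒞^0 = {f, g_1, …, g_m}` and
`𝒞^{k+1} = 𝒞^k ∪ {[X,h] : X ∈ {f, g_1, …, g_m}, h ∈ 𝒞^k}`. -/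
def accFam {n m : ℕ} (f : Fin n → MvPolynomial (Fin n) ℝ)
    (g : Fin m → Fin n → MvPolynomial (Fin n) ℝ) :
    ℕ → Set (Fin n → MvPolynomial (Fin n) ℝ)
  | 0 => insert f (Set.range g)
  | k + 1 => accFam f g k ∪
      {h | ∃ X ∈ insert f (Set.range g), ∃ h' ∈ accFam f g k, h = pBracket X h'}

/-- `C^k(a) = span_ℝ {h(a) : h ∈ 𝒞^k}`. -/
noncomputable def accSpan {n m : ℕ} (f : Fin n → MvPolynomial (Fin n) ℝ)
    (g : Fin m → Fin n → MvPolynomial (Fin n) ℝ) (k : ℕ) (a : Fin n → ℝ) :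
    Submodule ℝ (Fin n → ℝ) :=
  Submodule.span ℝ ((fun h => pvfEval h a) '' accFam f g k)

/-- `C(a) = span_ℝ {h(a) : h ∈ 𝒞}`, where `𝒞 = ⋃ k, 𝒞^k`. -/
noncomputable def accSpanInf {n m : ℕ} (f : Fin n → MvPolynomial (Fin n) ℝ)
    (g : Fin m → Fin n → MvPolynomial (Fin n) ℝ) (a : Fin n → ℝ) :
    Submodule ℝ (Fin n → ℝ) :=
  Submodule.span ℝ ((fun h => pvfEval h a) '' ⋃ k, accFam f g k)

/-- `S_k^{<l} = {a : dim C^k(a) < l}`. -/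
def singularSetLt {n m : ℕ} (f : Fin n → MvPolynomial (Fin n) ℝ)
    (g : Fin m → Fin n → MvPolynomial (Fin n) ℝ) (k l : ℕ) : Set (Fin n → ℝ) :=
  {a | Module.finrank ℝ (accSpan f g k a) < l}

/-- `S_∞^{<l} = {a : dim C(a) < l}`;  `S_∞ = S_∞^{<n}`. -/
def singularSetInfLt {n m : ℕ} (f : Fin n → MvPolynomial (Fin n) ℝ)
    (g : Fin m → Fin n → MvPolynomial (Fin n) ℝ) (l : ℕ) : Set (Fin n → ℝ) :=
  {a | Module.finrank ℝ (accSpanInf f g a) < l}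

lemma hasDerivWithinAt_mvpoly_eval {n : ℕ} (p : MvPolynomial (Fin n) ℝ)
    {x : ℝ → Fin n → ℝ} {x' : Fin n → ℝ} {s : Set ℝ} {t : ℝ}
    (hx : HasDerivWithinAt x x' s t) :
    HasDerivWithinAt (fun τ => eval (x τ) p) (∑ i, x' i * eval (x t) (pderiv i p)) s t := by
  classical
  induction p using MvPolynomial.induction_on with
  | C a => simpa using hasDerivWithinAt_const t s (a : ℝ)
  | add p q hp hq =>
      have := hp.fun_add hq
      simpa [mul_add, Finset.sum_add_distrib] using this
  | mul_X p j hp =>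
      have hj : HasDerivWithinAt (fun τ => x τ j) (x' j) s t := hasDerivWithinAt_pi.1 hx j
      have key : ∑ i, x' i * eval (x t) (pderiv i (p * X j))
          = (∑ i, x' i * eval (x t) (pderiv i p)) * x t j + eval (x t) p * x' j := by
        have step : ∀ i ∈ Finset.univ, x' i * eval (x t) (pderiv i (p * X j))
            = x' i * eval (x t) (pderiv i p) * x t j
              + (if i = j then eval (x t) p * x' i else 0) := by
          intro i _
          rcases eq_or_ne i j with h | h <;>
            simp [pderiv_mul, pderiv_X, Pi.single_apply, h] <;> ring
        rw [Finset.sum_congr rfl step, Finset.sum_add_distrib,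
          Finset.sum_ite_eq' Finset.univ j]
        simp [Finset.sum_mul]
      rw [key]
      simpa using hp.fun_mul hj


/-- If `J` is an ideal invariant under `L_X` and `x : [0,T] → ℝ^n` is a
solution of `x' = X(x)` with `x(0) ∈ 𝕍(J)`, then `x(t) ∈ 𝕍(J)` for all `t ∈ [0,T]`. -/
theorem invariant_ideal_variety_invariant {n : ℕ} (X : Fin n → MvPolynomial (Fin n) ℝ)
    (J : Ideal (MvPolynomial (Fin n) ℝ)) (hJ : IdealInvariant X J) (T : ℝ)
    (x : ℝ → Fin n → ℝ) (hcont : ContinuousOn x (Set.Icc 0 T))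
    (hx : ∀ t ∈ Set.Icc (0:ℝ) T,
      HasDerivWithinAt x (pvfEval X (x t)) (Set.Icc (0:ℝ) T) t)
    (h0 : x 0 ∈ zeroSet J) :
    ∀ t ∈ Set.Icc (0:ℝ) T, x t ∈ zeroSet J := by
  classical
  obtain ⟨s, hs⟩ : J.FG := IsNoetherian.noetherian J
  have hgen : ∀ p ∈ s, (p : MvPolynomial (Fin n) ℝ) ∈ J := fun p hp =>
    hs ▸ Submodule.subset_span hp
  have hQex : ∀ p : {q // q ∈ s}, ∃ Q : MvPolynomial (Fin n) ℝ → MvPolynomial (Fin n) ℝ,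
      ∑ q ∈ s, Q q * q = pLieDeriv X p.1 := by
    intro p
    have h1 : pLieDeriv X p.1 ∈ J := hJ _ (hgen p.1 p.2)
    rw [← hs] at h1
    obtain ⟨Q, -, hQ⟩ := Submodule.mem_span_finset.1 h1
    exact ⟨Q, by simpa [smul_eq_mul] using hQ⟩
  choose Q hQ using hQex
  let ι := {q // q ∈ s}
  set A : ι → ι → MvPolynomial (Fin n) ℝ := fun p q => Q p q.1 with hA
  set y : ℝ → ι → ℝ := fun t p => eval (x t) p.1 with hy
  set v : ℝ → (ι → ℝ) → (ι → ℝ) := fun t z p => ∑ q : ι, eval (x t) (A p q) * z q with hv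
  -- derivative
  have hy' : ∀ t ∈ Set.Icc (0:ℝ) T, HasDerivWithinAt y (v t (y t)) (Set.Icc 0 T) t := by
    intro t ht
    apply hasDerivWithinAt_pi.2
    intro p
    have h1 := hasDerivWithinAt_mvpoly_eval p.1 (hx t ht)
    convert h1 using 1
    · rfl
    · rfl
    have h2 : eval (x t) (pLieDeriv X p.1) = ∑ i, pvfEval X (x t) i * eval (x t) (pderiv i p.1) := by
      simp [pLieDeriv, pvfEval]
    rw [← h2, ← hQ p, map_sum]
    simp only [map_mul]
    exact Finset.sum_coe_sort s (fun q => eval (x t) (Q p q) * eval (x t) q)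
  -- continuity of y
  have hycont : ContinuousOn y (Set.Icc 0 T) := by
    apply continuousOn_pi.2
    intro p
    exact (MvPolynomial.continuous_eval p.1).comp_continuousOn hcont
  -- bound on entries
  obtain ⟨C0, hC0⟩ := (isCompact_Icc (a := (0:ℝ)) (b := T)).exists_bound_of_continuousOn
    (f := fun t => ∑ p : ι, ∑ q : ι, |eval (x t) (A p q)|)
    (by
      refine continuousOn_finset_sum _ fun p _ => continuousOn_finset_sum _ fun q _ => ?_
      exact ((MvPolynomial.continuous_eval (A p q)).comp_continuousOn hcont).abs)
  set C : ℝ := max C0 0 with hC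
  have hCnn : 0 ≤ C := le_max_right _ _
  have hbound : ∀ t ∈ Set.Icc (0:ℝ) T, ∀ p q : ι, |eval (x t) (A p q)| ≤ C := by
    intro t ht p q
    have h1 : |eval (x t) (A p q)| ≤ ∑ p' : ι, ∑ q' : ι, |eval (x t) (A p' q')| := by
      calc |eval (x t) (A p q)| ≤ ∑ q' : ι, |eval (x t) (A p q')| :=
            Finset.single_le_sum (f := fun q' => |eval (x t) (A p q')|) (fun q' _ => abs_nonneg _) (Finset.mem_univ q)
        _ ≤ ∑ p' : ι, ∑ q' : ι, |eval (x t) (A p' q')| :=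
            Finset.single_le_sum (f := fun p' => ∑ q' : ι, |eval (x t) (A p' q')|)
              (fun p' _ => Finset.sum_nonneg fun q' _ => abs_nonneg _) (Finset.mem_univ p)
    have h2 := hC0 t ht
    rw [Real.norm_eq_abs] at h2
    exact h1.trans ((le_abs_self _).trans (h2.trans (le_max_left _ _)))
  set K : NNReal := (Fintype.card ι * C).toNNReal with hK
  have hKC : (K : ℝ) = Fintype.card ι * C :=
    Real.coe_toNNReal _ (by positivity)
  -- Lipschitz
  set S : ℝ → Set (ι → ℝ) := fun t => if t ∈ Set.Icc (0:ℝ) T then Set.univ else ∅ with hS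
  have hlip : ∀ t, LipschitzOnWith K (v t) (S t) := by
    intro t
    by_cases ht : t ∈ Set.Icc (0:ℝ) T
    · rw [hS]; simp only [ht, if_pos]
      rw [lipschitzOnWith_iff_dist_le_mul]
      intro z _ w _
      rw [dist_pi_le_iff (by positivity)]
      intro p
      have h1 : dist (v t z p) (v t w p) ≤ ∑ q : ι, C * dist z w := by
        rw [Real.dist_eq, hv]
        simp only
        rw [← Finset.sum_sub_distrib]
        refine (Finset.abs_sum_le_sum_abs _ _).trans (Finset.sum_le_sum fun q _ => ?_)
        rw [← mul_sub, abs_mul]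
        refine mul_le_mul (hbound t ht p q) ?_ (abs_nonneg _) hCnn
        rw [← Real.dist_eq]
        exact dist_le_pi_dist z w q
      simpa [hKC, Finset.sum_const, nsmul_eq_mul, mul_assoc] using h1
    · rw [hS]; simp only [ht, if_neg]
      exact (Set.subset_empty_iff.1 (le_refl _) ▸ by simp)
  -- uniqueness of ODE solutions: y ≡ 0 on Icc 0 T
  have huniq : Set.EqOn y (fun _ => (0 : ι → ℝ)) (Set.Icc 0 T) := by
    apply ODE_solution_unique_of_mem_Icc_right (fun t _ => hlip t) hycont
    · intro t ht
      exact ((hy' t (Set.Ico_subset_Icc_self ht)).mono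
        (Set.Icc_subset_Icc ht.1 le_rfl)).mono_of_mem_nhdsWithin
        (Icc_mem_nhdsGE_of_mem ⟨le_rfl, ht.2⟩)
    · intro t ht
      simp only [hS]
      rw [if_pos (Set.Ico_subset_Icc_self ht)]
      trivial
    · exact continuousOn_const
    · intro t ht
      have hz : v t ((fun _ => (0 : ι → ℝ)) t) = 0 := by
        funext p; simp [hv]
      rw [hz]
      exact hasDerivWithinAt_const _ _ _
    · intro t ht
      simp only [hS]
      rw [if_pos (Set.Ico_subset_Icc_self ht)]
      trivial
    · funext p
      exact h0 p.1 (hgen p.1 p.2)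
  intro t ht p hp
  rw [← hs] at hp
  refine Submodule.span_induction (p := fun q _ => eval (x t) q = 0) ?_ ?_ ?_ ?_ hp
  · intro q hq
    have h1 := congrFun (huniq ht) ⟨q, Finset.mem_coe.1 hq⟩
    simpa [hy] using h1
  · simp
  · intro a b _ _ ha hb; simp [ha, hb]
  · intro c a _ ha; simp [smul_eq_mul, ha]
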